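/- Let X be a real or complex Banach space and H ⊆ B_{X*} an (I)-generating set for B_{X*}. Let I be an ideal on ℕ such that F(I) has a countable base, and B = (B_i)_{i∈S} a family of matrices with Σ_k |b_{nk}^{(i)}| < ∞ for all n, i, and M := sup{Σ_k |b_{nk}^{(i)}| : n ∈ ℕ\A, i ∈ S} < ∞ for some A ∈ I. Let (x_n) be a bounded sequence in X and x ∈ X such that for every x* ∈ H, Σ_k b_{nk}^{(i)} x*(x_k) → x*(x) along I uniformly in i ∈ S. Then the same holds for every x* ∈ X*. -/

import Mathlib

open NormedSpace Filter Metric Topology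

section Aux
variable {𝕜 X : Type*} [RCLike 𝕜] [NormedAddCommGroup X] [NormedSpace 𝕜 X]
  {S : Type*}

/-- The matrix transform of the sequence `f (x k)`. -/
noncomputable def Ltr (b : S → ℕ → ℕ → ℝ) (x : ℕ → X) (x0 : X) (i : S) (n : ℕ)
    (f : StrongDual 𝕜 X) : 𝕜 :=
  (∑' k, b i n k • f (x k)) - f x0

variable {b : S → ℕ → ℕ → ℝ} {x : ℕ → X} {x0 : X} {R : ℝ}

lemma summ_aux (habs : ∀ (i : S) (n : ℕ), Summable fun k => |b i n k|)
    (hxR : ∀ n, ‖x n‖ ≤ R) (f : StrongDual 𝕜 X) (i : S) (n : ℕ) :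
    Summable fun k => b i n k • f (x k) := by
  apply Summable.of_norm_bounded ((habs i n).mul_right (‖f‖ * R))
  intro k
  rw [norm_smul, Real.norm_eq_abs]
  refine mul_le_mul_of_nonneg_left ?_ (abs_nonneg _)
  exact (f.le_opNorm (x k)).trans
    (mul_le_mul_of_nonneg_left (hxR k) (norm_nonneg f))

lemma summ_norm_aux (habs : ∀ (i : S) (n : ℕ), Summable fun k => |b i n k|)
    (hxR : ∀ n, ‖x n‖ ≤ R) (f : StrongDual 𝕜 X) (i : S) (n : ℕ) :
    Summable fun k => ‖b i n k • f (x k)‖ := by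
  refine Summable.of_nonneg_of_le (fun k => norm_nonneg _) (fun k => ?_)
    ((habs i n).mul_right (‖f‖ * R))
  rw [norm_smul, Real.norm_eq_abs]
  refine mul_le_mul_of_nonneg_left ?_ (abs_nonneg _)
  exact (f.le_opNorm (x k)).trans
    (mul_le_mul_of_nonneg_left (hxR k) (norm_nonneg f))

lemma Ltr_sub (habs : ∀ (i : S) (n : ℕ), Summable fun k => |b i n k|)
    (hxR : ∀ n, ‖x n‖ ≤ R) (f g : StrongDual 𝕜 X) (i : S) (n : ℕ) :
    Ltr b x x0 i n (f - g) = Ltr b x x0 i n f - Ltr b x x0 i n g := by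
  unfold Ltr
  have h1 : ∀ k, b i n k • (f - g) (x k) = b i n k • f (x k) - b i n k • g (x k) := by
    intro k; rw [ContinuousLinearMap.sub_apply, smul_sub]
  rw [tsum_congr h1, Summable.tsum_sub (summ_aux habs hxR f i n) (summ_aux habs hxR g i n),
    ContinuousLinearMap.sub_apply]
  abel

lemma Ltr_add (habs : ∀ (i : S) (n : ℕ), Summable fun k => |b i n k|)
    (hxR : ∀ n, ‖x n‖ ≤ R) (f g : StrongDual 𝕜 X) (i : S) (n : ℕ) :
    Ltr b x x0 i n (f + g) = Ltr b x x0 i n f + Ltr b x x0 i n g := by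
  unfold Ltr
  have h1 : ∀ k, b i n k • (f + g) (x k) = b i n k • f (x k) + b i n k • g (x k) := by
    intro k; rw [ContinuousLinearMap.add_apply, smul_add]
  rw [tsum_congr h1, Summable.tsum_add (summ_aux habs hxR f i n) (summ_aux habs hxR g i n),
    ContinuousLinearMap.add_apply]
  abel

lemma Ltr_smul (habs : ∀ (i : S) (n : ℕ), Summable fun k => |b i n k|)
    (hxR : ∀ n, ‖x n‖ ≤ R) (f : StrongDual 𝕜 X) (r : ℝ) (i : S) (n : ℕ) :
    Ltr b x x0 i n (r • f) = r • Ltr b x x0 i n f := by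
  unfold Ltr
  have h1 : ∀ k, b i n k • (r • f) (x k) = r • (b i n k • f (x k)) := by
    intro k; rw [ContinuousLinearMap.smul_apply, smul_comm]
  rw [tsum_congr h1, Summable.tsum_const_smul r (summ_aux habs hxR f i n),
    ContinuousLinearMap.smul_apply, smul_sub]

lemma Ltr_norm_le (habs : ∀ (i : S) (n : ℕ), Summable fun k => |b i n k|)
    (hxR : ∀ n, ‖x n‖ ≤ R) (f : StrongDual 𝕜 X) (i : S) (n : ℕ) :
    ‖Ltr b x x0 i n f‖ ≤ (∑' k, |b i n k|) * (‖f‖ * R) + ‖f‖ * ‖x0‖ := by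
  unfold Ltr
  refine (norm_sub_le _ _).trans (add_le_add ?_ (f.le_opNorm x0))
  refine (norm_tsum_le_tsum_norm (summ_norm_aux habs hxR f i n)).trans ?_
  rw [← tsum_mul_right]
  refine Summable.tsum_le_tsum ?_ (summ_norm_aux habs hxR f i n) ((habs i n).mul_right _)
  intro k
  rw [norm_smul, Real.norm_eq_abs]
  refine mul_le_mul_of_nonneg_left ?_ (abs_nonneg _)
  exact (f.le_opNorm (x k)).trans
    (mul_le_mul_of_nonneg_left (hxR k) (norm_nonneg f))

end Aux



/-- An ideal on ℕ: nonempty collection of subsets, not containing ℕ,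
closed under subsets and finite unions. -/
def IsIdeal (I : Set (Set ℕ)) : Prop :=
  I.Nonempty ∧ Set.univ ∉ I ∧ (∀ A ∈ I, ∀ B, B ⊆ A → B ∈ I) ∧ ∀ A ∈ I, ∀ B ∈ I, A ∪ B ∈ I

/-- Convergence of `g n i` to `g0 i` along the ideal `I`, uniformly in `i ∈ S`. -/
def UnifConvAlong {S : Type*} (I : Set (Set ℕ)) (g : ℕ → S → ℝ) (g0 : S → ℝ) : Prop :=
  ∀ ε > 0, ∃ E ∈ I, ∀ i : S, {n : ℕ | ε ≤ |g n i - g0 i|} ⊆ E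

/-- The collection `J_{B,I}` of sets `K ⊆ ℕ` whose matrix transforms tend to 0 along `I`
uniformly in `i ∈ S`. -/
def matIdeal {S : Type*} (I : Set (Set ℕ)) (b : S → ℕ → ℕ → ℝ) : Set (Set ℕ) :=
  {K : Set ℕ | UnifConvAlong I (fun n i => ∑' k, b i n k * K.indicator 1 k) (fun _ => 0)}

/-- `I`-limit superior of a real sequence. -/
noncomputable def idealLimSup (I : Set (Set ℕ)) (s : ℕ → ℝ) : ℝ :=
  sSup {t : ℝ | {n : ℕ | t < s n} ∉ I}

/-- `I`-limit inferior of a real sequence. -/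
noncomputable def idealLimInf (I : Set (Set ℕ)) (s : ℕ → ℝ) : ℝ :=
  sInf {t : ℝ | {n : ℕ | s n < t} ∉ I}

/-- `I`-convergence of a real sequence to `a`. -/
def IdealConv (I : Set (Set ℕ)) (s : ℕ → ℝ) (a : ℝ) : Prop :=
  ∀ ε > 0, {n : ℕ | ε ≤ |s n - a|} ∈ I

/-- `B^I`-statistical convergence of `s` to `a`. -/
def BStatConv {S : Type*} (I : Set (Set ℕ)) (b : S → ℕ → ℕ → ℝ) (s : ℕ → ℝ) (a : ℝ) : Prop :=
  ∀ ε > 0, UnifConvAlong I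
    (fun n i => ∑' k, b i n k * Set.indicator {k : ℕ | ε ≤ |s k - a|} 1 k) (fun _ => 0)

/-- The weak*-closure of a set of functionals, computed in the weak* topology. -/
noncomputable def wstarClosure {𝕜 X : Type*} [RCLike 𝕜] [NormedAddCommGroup X]
    [NormedSpace 𝕜 X] (T : Set (StrongDual 𝕜 X)) : Set (StrongDual 𝕜 X) :=
  StrongDual.toWeakDual ⁻¹' closure (StrongDual.toWeakDual '' T)

/-- `H` (I)-generates `K`: whenever `H = ⋃ m, H m` with `H m` increasing, the norm-closure
of the union of the weak*-closed (real) convex hulls of the `H m` equals `K`. -/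
def IGenerates {𝕜 X : Type*} [RCLike 𝕜] [NormedAddCommGroup X] [NormedSpace 𝕜 X]
    (H K : Set (StrongDual 𝕜 X)) : Prop :=
  ∀ Hm : ℕ → Set (StrongDual 𝕜 X), Monotone Hm → (⋃ m, Hm m) = H →
    closure (⋃ m, wstarClosure (convexHull ℝ (Hm m))) = K

set_option maxHeartbeats 1000000 in
/-- Rainwater–Simons-type theorem for `B^I`-summability: if the `B^I`-transforms of
`(x*(xₙ))` converge to `x*(x)` for every `x*` in an (I)-generating subset `H` of the dual
unit ball, then the same holds for every `x* ∈ X*`. -/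
theorem stmt18 {𝕜 X : Type*} [RCLike 𝕜] [NormedAddCommGroup X] [NormedSpace 𝕜 X]
    [CompleteSpace X] {S : Type*} [Nonempty S]
    (H : Set (StrongDual 𝕜 X))
    (hH : H ⊆ Metric.closedBall (0 : StrongDual 𝕜 X) 1)
    (hgen : IGenerates H (Metric.closedBall (0 : StrongDual 𝕜 X) 1))
    (I : Set (Set ℕ)) (hI : IsIdeal I)
    (hbase : ∃ C : ℕ → Set ℕ, (∀ m, C m ∈ I) ∧ ∀ A ∈ I, ∃ m, A ⊆ C m)
    (b : S → ℕ → ℕ → ℝ)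
    (habs : ∀ (i : S) (n : ℕ), Summable fun k => |b i n k|)
    (hM : ∃ A ∈ I, ∃ M : ℝ, ∀ (i : S), ∀ n ∉ A, ∑' k, |b i n k| ≤ M)
    (x : ℕ → X) (hbdd : ∃ R : ℝ, ∀ n, ‖x n‖ ≤ R) (x0 : X)
    (hH_conv : ∀ f ∈ H, ∀ ε > (0 : ℝ), ∃ E ∈ I, ∀ i : S,
      {n : ℕ | ε ≤ ‖(∑' k, b i n k • f (x k)) - f x0‖} ⊆ E) :
    ∀ f : StrongDual 𝕜 X, ∀ ε > (0 : ℝ), ∃ E ∈ I, ∀ i : S,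
      {n : ℕ | ε ≤ ‖(∑' k, b i n k • f (x k)) - f x0‖} ⊆ E := by
  classical
  obtain ⟨R0, hR0⟩ := hbdd
  set R : ℝ := max R0 0 with hRdef
  have hxR : ∀ n, ‖x n‖ ≤ R := fun n => (hR0 n).trans (le_max_left _ _)
  have hR : 0 ≤ R := le_max_right _ _
  obtain ⟨A, hA, M0, hM0⟩ := hM
  set M : ℝ := max M0 0 with hMdef
  have hMb : ∀ (i : S), ∀ n ∉ A, ∑' k, |b i n k| ≤ M :=
    fun i n hn => (hM0 i n hn).trans (le_max_left _ _)
  have hMpos : 0 ≤ M := le_max_right _ _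
  obtain ⟨C, hCI, hCbase⟩ := hbase
  obtain ⟨A1, hA1⟩ := hI.1
  have hIdown := hI.2.2.1
  have hIunion := hI.2.2.2
  have hempty : (∅ : Set ℕ) ∈ I := hIdown A1 hA1 ∅ (Set.empty_subset _)
  -- the increasing sequence of exceptional sets
  set D : ℕ → Set ℕ := fun m => A ∪ ⋃ l ≤ m, C l with hDdef
  have hDI : ∀ m, D m ∈ I := by
    intro m
    induction m with
    | zero =>
      have h0 : D 0 = A ∪ C 0 := by simp [hDdef, Nat.le_zero]
      rw [h0]; exact hIunion A hA (C 0) (hCI 0)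
    | succ m ih =>
      have h0 : D (m+1) = D m ∪ C (m+1) := by
        simp only [hDdef, Set.biUnion_le_succ, Set.union_assoc]
      rw [h0]; exact hIunion _ ih _ (hCI (m+1))
  have hDmono : Monotone D := by
    intro m m' hmm s hs
    rcases hs with hs | hs
    · exact Or.inl hs
    · right
      simp only [Set.mem_iUnion] at hs ⊢
      obtain ⟨l, hl, hsl⟩ := hs
      exact ⟨l, hl.trans hmm, hsl⟩
  have hCD : ∀ m, C m ⊆ D m := by
    intro m s hs
    right; simp only [Set.mem_iUnion]; exact ⟨m, le_refl m, hs⟩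
  have hAD : ∀ m, A ⊆ D m := fun m => Set.subset_union_left
  -- the unit-ball case
  have key : ∀ f : StrongDual 𝕜 X, ‖f‖ ≤ 1 → ∀ ε > (0:ℝ), ∃ E ∈ I, ∀ i : S,
      {n : ℕ | ε ≤ ‖Ltr b x x0 i n f‖} ⊆ E := by
    intro f hf ε hε
    set Hs : ℕ → Set (StrongDual 𝕜 X) :=
      fun m => {h | h ∈ H ∧ ∀ i : S, ∀ n ∉ D m, ‖Ltr b x x0 i n h‖ ≤ ε/3} with hHsdef
    have hHsmono : Monotone Hs := by
      intro m m' hmm h hh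
      exact ⟨hh.1, fun i n hn => hh.2 i n (fun hc => hn (hDmono hmm hc))⟩
    have hHsunion : (⋃ m, Hs m) = H := by
      apply Set.Subset.antisymm
      · exact Set.iUnion_subset (fun m h hh => hh.1)
      · intro h hh
        obtain ⟨E, hE, hEp⟩ := hH_conv h hh (ε/3) (by positivity)
        obtain ⟨m, hEm⟩ := hCbase E hE
        refine Set.mem_iUnion.2 ⟨m, hh, ?_⟩
        intro i n hn
        by_contra hle
        push_neg at hle
        exact hn (hCD m (hEm (hEp i (le_of_lt hle))))
    have hball := hgen Hs hHsmono hHsunion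
    have hfb : f ∈ closure (⋃ m, wstarClosure (convexHull ℝ (Hs m))) := by
      rw [hball]; exact mem_closedBall_zero_iff.2 hf
    set δ : ℝ := min (ε / (3 * (M * R + ‖x0‖ + 1))) 1 with hδdef
    have hδpos : 0 < δ := lt_min (by positivity) one_pos
    obtain ⟨g, hgmem, hdist⟩ := Metric.mem_closure_iff.1 hfb δ hδpos
    obtain ⟨m, hgm⟩ := Set.mem_iUnion.1 hgmem
    have hfg : ‖f - g‖ < δ := by rwa [← dist_eq_norm]
    have hδ1 : δ ≤ 1 := min_le_right _ _
    have hgnorm : ‖g‖ ≤ 2 := by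
      have h1 : g = f - (f - g) := by abel
      have h2 : ‖f - (f - g)‖ ≤ ‖f‖ + ‖f - g‖ := norm_sub_le _ _
      rw [h1]; linarith
    -- property of the convex hull
    have hhull : ∀ ψ ∈ convexHull ℝ (Hs m),
        ‖ψ‖ ≤ 1 ∧ ∀ i : S, ∀ n ∉ D m, ‖Ltr b x x0 i n ψ‖ ≤ ε/3 := by
      have hsubset : convexHull ℝ (Hs m) ⊆
          {φ : StrongDual 𝕜 X | ‖φ‖ ≤ 1 ∧ ∀ i : S, ∀ n ∉ D m, ‖Ltr b x x0 i n φ‖ ≤ ε/3} := by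
        apply convexHull_min
        · intro h hh
          exact ⟨mem_closedBall_zero_iff.1 (hH hh.1), hh.2⟩
        · rintro φ ⟨hφ1, hφ2⟩ χ ⟨hχ1, hχ2⟩ a c ha hc hac
          have hnorms : ∀ (u v : StrongDual 𝕜 X), ‖a • u + c • v‖ ≤ a * ‖u‖ + c * ‖v‖ := by
            intro u v
            refine (norm_add_le _ _).trans (le_of_eq ?_)
            rw [norm_smul, norm_smul, Real.norm_eq_abs, Real.norm_eq_abs,
              abs_of_nonneg ha, abs_of_nonneg hc]
          constructor
          · refine (hnorms φ χ).trans ?_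
            calc a * ‖φ‖ + c * ‖χ‖ ≤ a * 1 + c * 1 := by
                  exact add_le_add (mul_le_mul_of_nonneg_left hφ1 ha)
                    (mul_le_mul_of_nonneg_left hχ1 hc)
              _ = 1 := by rw [mul_one, mul_one, hac]
          · intro i n hn
            have hL : Ltr b x x0 i n (a • φ + c • χ)
                = a • Ltr b x x0 i n φ + c • Ltr b x x0 i n χ := by
              rw [Ltr_add habs hxR, Ltr_smul habs hxR, Ltr_smul habs hxR]
            rw [hL]
            have : ‖a • Ltr b x x0 i n φ + c • Ltr b x x0 i n χ‖
                ≤ a * ‖Ltr b x x0 i n φ‖ + c * ‖Ltr b x x0 i n χ‖ := by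
              refine (norm_add_le _ _).trans (le_of_eq ?_)
              rw [norm_smul, norm_smul, Real.norm_eq_abs, Real.norm_eq_abs,
                abs_of_nonneg ha, abs_of_nonneg hc]
            refine this.trans ?_
            calc a * ‖Ltr b x x0 i n φ‖ + c * ‖Ltr b x x0 i n χ‖
                ≤ a * (ε/3) + c * (ε/3) := by
                  exact add_le_add (mul_le_mul_of_nonneg_left (hφ2 i n hn) ha)
                    (mul_le_mul_of_nonneg_left (hχ2 i n hn) hc)
              _ = ε/3 := by rw [← add_mul, hac, one_mul]
      exact fun ψ hψ => hsubset hψ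
    -- the weak*-closure estimate for g
    have hgb : ∀ i : S, ∀ n ∉ D m, ‖Ltr b x x0 i n g‖ ≤ ε/3 := by
      intro i n hn
      refine le_of_forall_pos_le_add (fun η hη => ?_)
      have htail : Tendsto (fun N => ∑' j, |b i n (j + N)|) atTop (𝓝 0) :=
        tendsto_sum_nat_add (fun k => |b i n k|)
      have hbp : 0 < η / (3*(2*R+1)) := by positivity
      obtain ⟨N, hN⟩ := (htail.eventually (gt_mem_nhds hbp)).exists
      have htail0 : (0:ℝ) ≤ ∑' j, |b i n (j + N)| := tsum_nonneg (fun j => abs_nonneg _)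
      -- finite-rank approximation of the transform, as a weak*-continuous map
      set FN : WeakDual 𝕜 X → 𝕜 :=
        fun χ => (∑ k ∈ Finset.range N, b i n k • χ (x k)) - χ x0 with hFNdef
      have hFNcont : Continuous FN := by
        apply Continuous.sub
        · exact continuous_finset_sum _
            (fun k _ => (WeakDual.eval_continuous (x k)).const_smul (b i n k))
        · exact WeakDual.eval_continuous x0
      have hFNeq : ∀ φ : StrongDual 𝕜 X, FN (StrongDual.toWeakDual φ)
          = (∑ k ∈ Finset.range N, b i n k • φ (x k)) - φ x0 := fun φ => rfl
      have happrox : ∀ φ : StrongDual 𝕜 X, ‖φ‖ ≤ 2 →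
          ‖Ltr b x x0 i n φ - FN (StrongDual.toWeakDual φ)‖
            ≤ (∑' j, |b i n (j + N)|) * (2 * R) := by
        intro φ hφ
        have hsum := Summable.sum_add_tsum_nat_add (f := fun k => b i n k • φ (x k)) N
          (summ_aux habs hxR φ i n)
        have hdecomp : Ltr b x x0 i n φ - FN (StrongDual.toWeakDual φ)
            = ∑' j, b i n (j + N) • φ (x (j + N)) := by
          rw [hFNeq]
          unfold Ltr
          rw [sub_sub_sub_cancel_right]
          rw [← hsum]
          abel
        rw [hdecomp]
        have hsn : Summable fun j => ‖b i n (j + N) • φ (x (j + N))‖ :=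
          (summable_nat_add_iff N).2 (summ_norm_aux habs hxR φ i n)
        have hsb : Summable fun j => |b i n (j + N)| * (2 * R) :=
          ((summable_nat_add_iff N).2 (habs i n)).mul_right _
        refine (norm_tsum_le_tsum_norm hsn).trans ?_
        rw [← tsum_mul_right]
        refine Summable.tsum_le_tsum (fun j => ?_) hsn hsb
        rw [norm_smul, Real.norm_eq_abs]
        refine mul_le_mul_of_nonneg_left ?_ (abs_nonneg _)
        refine (φ.le_opNorm _).trans ?_
        exact mul_le_mul hφ (hxR _) (norm_nonneg _) (by norm_num)
      -- pass to an element of the convex hull through the weak* closure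
      have hgw : StrongDual.toWeakDual g ∈
          closure (StrongDual.toWeakDual '' (convexHull ℝ (Hs m))) := hgm
      set U : Set (WeakDual 𝕜 X) :=
        {χ | ‖FN χ - FN (StrongDual.toWeakDual g)‖ < η/3} with hUdef
      have hUopen : IsOpen U := by
        have hc : Continuous fun χ => ‖FN χ - FN (StrongDual.toWeakDual g)‖ :=
          (hFNcont.sub continuous_const).norm
        exact isOpen_lt hc continuous_const
      have hUg : StrongDual.toWeakDual g ∈ U := by
        simp only [hUdef, Set.mem_setOf_eq, sub_self, norm_zero]
        positivity
      obtain ⟨χ, hχU, hχim⟩ := _root_.mem_closure_iff.1 hgw U hUopen hUg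
      obtain ⟨ψ, hψhull, rfl⟩ := hχim
      obtain ⟨hψ1, hψ2⟩ := hhull ψ hψhull
      have e1 : ‖Ltr b x x0 i n g - FN (StrongDual.toWeakDual g)‖
          ≤ (∑' j, |b i n (j + N)|) * (2*R) := happrox g hgnorm
      have e2 : ‖FN (StrongDual.toWeakDual ψ) - FN (StrongDual.toWeakDual g)‖
          < η/3 := hχU
      have e3 : ‖Ltr b x x0 i n ψ - FN (StrongDual.toWeakDual ψ)‖
          ≤ (∑' j, |b i n (j + N)|) * (2*R) := happrox ψ (by linarith)
      have e4 : ‖Ltr b x x0 i n ψ‖ ≤ ε/3 := hψ2 i n hn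
      have etail : (∑' j, |b i n (j + N)|) * (2*R) ≤ η/3 := by
        have h1 : (∑' j, |b i n (j + N)|) * (2*R) ≤ (η / (3*(2*R+1))) * (2*R) :=
          mul_le_mul_of_nonneg_right (le_of_lt hN) (by positivity)
        refine h1.trans ?_
        rw [div_mul_eq_mul_div, div_le_div_iff₀ (by positivity) (by norm_num)]
        nlinarith
      have hsplit : Ltr b x x0 i n g
          = (Ltr b x x0 i n g - FN (StrongDual.toWeakDual g))
            - (FN (StrongDual.toWeakDual ψ) - FN (StrongDual.toWeakDual g))
            - (Ltr b x x0 i n ψ - FN (StrongDual.toWeakDual ψ))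
            + Ltr b x x0 i n ψ := by
        abel
      have hb1 : ‖Ltr b x x0 i n g‖
          ≤ ‖Ltr b x x0 i n g - FN (StrongDual.toWeakDual g)‖
            + ‖FN (StrongDual.toWeakDual ψ) - FN (StrongDual.toWeakDual g)‖
            + ‖Ltr b x x0 i n ψ - FN (StrongDual.toWeakDual ψ)‖
            + ‖Ltr b x x0 i n ψ‖ := by
        have t1 := norm_add_le (Ltr b x x0 i n g - FN (StrongDual.toWeakDual g)
            - (FN (StrongDual.toWeakDual ψ) - FN (StrongDual.toWeakDual g))
            - (Ltr b x x0 i n ψ - FN (StrongDual.toWeakDual ψ))) (Ltr b x x0 i n ψ)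
        have t2 := norm_sub_le (Ltr b x x0 i n g - FN (StrongDual.toWeakDual g)
            - (FN (StrongDual.toWeakDual ψ) - FN (StrongDual.toWeakDual g)))
            (Ltr b x x0 i n ψ - FN (StrongDual.toWeakDual ψ))
        have t3 := norm_sub_le (Ltr b x x0 i n g - FN (StrongDual.toWeakDual g))
            (FN (StrongDual.toWeakDual ψ) - FN (StrongDual.toWeakDual g))
        conv_lhs => rw [hsplit]
        linarith
      linarith
    -- conclusion for f
    refine ⟨D m, hDI m, fun i => ?_⟩
    intro n hn
    by_contra hnD
    have hnA : n ∉ A := fun hc => hnD (hAD m hc)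
    have hεf : ε ≤ ‖Ltr b x x0 i n f‖ := hn
    have l1 : ‖Ltr b x x0 i n f‖ ≤ ‖Ltr b x x0 i n g‖ + ‖Ltr b x x0 i n (f - g)‖ := by
      have h1 : Ltr b x x0 i n f = Ltr b x x0 i n g + Ltr b x x0 i n (f - g) := by
        rw [Ltr_sub habs hxR]; abel
      rw [h1]; exact norm_add_le _ _
    have l2 : ‖Ltr b x x0 i n (f - g)‖ ≤ M * (‖f - g‖ * R) + ‖f - g‖ * ‖x0‖ := by
      refine (Ltr_norm_le habs hxR (f - g) i n).trans ?_
      refine add_le_add_left (mul_le_mul_of_nonneg_right (hMb i n hnA) ?_) _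
      positivity
    have l3 : ‖Ltr b x x0 i n g‖ ≤ ε/3 := hgb i n hnD
    have hδ2 : δ * (3 * (M * R + ‖x0‖ + 1)) ≤ ε := by
      have := min_le_left (ε / (3 * (M * R + ‖x0‖ + 1))) 1
      rw [← hδdef] at this
      calc δ * (3 * (M * R + ‖x0‖ + 1)) ≤ (ε / (3 * (M * R + ‖x0‖ + 1)))
            * (3 * (M * R + ‖x0‖ + 1)) :=
          mul_le_mul_of_nonneg_right this (by positivity)
        _ = ε := by field_simp
    have hfgn : (0:ℝ) ≤ ‖f - g‖ := norm_nonneg _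
    have hx0n : (0:ℝ) ≤ ‖x0‖ := norm_nonneg _
    nlinarith [mul_le_mul_of_nonneg_right hfg.le (show (0:ℝ) ≤ M * R + ‖x0‖ by positivity)]
  -- general case by scaling
  intro f ε hε
  by_cases hf0 : f = 0
  · refine ⟨∅, hempty, fun i n hn => ?_⟩
    exfalso
    subst hf0
    have h0 : ((∑' k, b i n k • (0 : StrongDual 𝕜 X) (x k)) - (0 : StrongDual 𝕜 X) x0 : 𝕜) = 0 := by
      simp only [ContinuousLinearMap.zero_apply, smul_zero, tsum_zero, sub_zero]
    have hn' : ε ≤ ‖(∑' k, b i n k • (0 : StrongDual 𝕜 X) (x k)) - (0 : StrongDual 𝕜 X) x0‖ := hn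
    rw [h0, norm_zero] at hn'
    linarith
  · have hfpos : 0 < ‖f‖ := by rwa [norm_pos_iff]
    have hf1 : ‖(‖f‖⁻¹ : ℝ) • f‖ ≤ 1 := by
      rw [norm_smul, Real.norm_eq_abs, abs_of_pos (inv_pos.2 hfpos),
        inv_mul_cancel₀ (ne_of_gt hfpos)]
    obtain ⟨E, hE, hEp⟩ := key ((‖f‖⁻¹ : ℝ) • f) hf1 (ε / ‖f‖) (div_pos hε hfpos)
    refine ⟨E, hE, fun i => ?_⟩
    intro n hn
    apply hEp i
    show ε / ‖f‖ ≤ ‖Ltr b x x0 i n ((‖f‖⁻¹ : ℝ) • f)‖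
    rw [Ltr_smul habs hxR f _ i n, norm_smul, Real.norm_eq_abs,
      abs_of_pos (inv_pos.2 hfpos), div_eq_inv_mul]
    have hn' : ε ≤ ‖Ltr b x x0 i n f‖ := hn
    exact mul_le_mul_of_nonneg_left hn' (le_of_lt (inv_pos.2 hfpos))
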